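/- No maximal cofinitary group is contained in a K_σ subset of ℕ^ℕ: if G ≤ S_∞ is cofinitary and G ⊆ ⋃_{n} K_n with each K_n ⊆ ℕ^ℕ compact, then G is not maximal. -/

import Mathlib

def Cofinitary (G : Subgroup (Equiv.Perm ℕ)) : Prop :=
  ∀ g ∈ G, g ≠ 1 → {n : ℕ | g n = n}.Finite

namespace Stmt16

open Equiv

attribute [local instance] Classical.propDecidable

variable (K : ℕ → Set (ℕ → ℕ))

def J (e : ℕ) : Set (ℕ → ℕ) := ⋃ i ∈ Finset.range (e + 1), K i

lemma mem_J_of {n e : ℕ} (h : n ≤ e) {f : ℕ → ℕ} (hf : f ∈ K n) : f ∈ J K e := by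
  simp only [J, Set.mem_iUnion]
  exact ⟨n, by simp; omega, hf⟩

lemma J_mono {e e' : ℕ} (h : e ≤ e') : J K e ⊆ J K e' := by
  intro f hf
  simp only [J, Set.mem_iUnion, Finset.mem_range] at *
  obtain ⟨i, hi, hfi⟩ := hf
  exact ⟨i, by omega, hfi⟩

def Symm (e : ℕ) : Set (ℕ → ℕ) :=
  {f | f ∈ J K e ∧ ∃ f' ∈ J K e, (∀ x, f' (f x) = x) ∧ (∀ x, f (f' x) = x)}

lemma Symm_mono {e e' : ℕ} (h : e ≤ e') : Symm K e ⊆ Symm K e' := by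
  rintro f ⟨hf, f', hf', h1, h2⟩
  exact ⟨J_mono K h hf, f', J_mono K h hf', h1, h2⟩

variable (hK : ∀ n, IsCompact (K n))

include hK in
lemma J_compact (e : ℕ) : IsCompact (J K e) := by
  apply Finset.isCompact_biUnion
  intro i _
  exact hK i

def Img (e : ℕ) (D : Finset ℕ) : Set ℕ := {y | ∃ f ∈ J K e, ∃ d ∈ D, f d = y}

include hK in
lemma Img_finite (e : ℕ) (D : Finset ℕ) : (Img K e D).Finite := by
  have : Img K e D ⊆ ⋃ d ∈ D, (fun f => f d) '' (J K e) := by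
    rintro y ⟨f, hf, d, hd, rfl⟩
    exact Set.mem_biUnion hd ⟨f, hf, rfl⟩
  refine Set.Finite.subset ?_ this
  apply Set.Finite.biUnion D.finite_toSet
  intro d _
  exact ((J_compact K hK e).image (continuous_apply d)).finite_of_discrete

include hK in
lemma exists_fresh (e : ℕ) (D : Finset ℕ) (bd : ℕ) :
    ∃ φ : ℕ, bd < φ ∧ φ ∉ D ∧ ∀ f ∈ Symm K e, ∀ d ∈ D, f φ ≠ d ∧ f d ≠ φ := by
  have hBad : (↑D ∪ Img K e D : Set ℕ).Finite := D.finite_toSet.union (Img_finite K hK e D)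
  obtain ⟨N, hN⟩ := hBad.bddAbove
  refine ⟨max bd N + 1, by omega, ?_, ?_⟩
  · intro hmem
    have := hN (Set.mem_union_left _ (by exact_mod_cast hmem))
    omega
  · intro f hf d hd
    constructor
    · intro hfd
      obtain ⟨hfJ, f', hf'J, h1, h2⟩ := hf
      have : f' d ∈ Img K e D := ⟨f', hf'J, d, hd, rfl⟩
      have hb := hN (Set.mem_union_right _ this)
      rw [← hfd, h1] at hb
      omega
    · intro hdf
      have : f d ∈ Img K e D := ⟨f, hf.1, d, hd, rfl⟩
      have hb := hN (Set.mem_union_right _ this)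
      rw [hdf] at hb
      omega

section Construction

noncomputable def freshC (e : ℕ) (D : Finset ℕ) (bd : ℕ) : ℕ :=
  (exists_fresh K hK e D bd).choose

lemma freshC_gt (e : ℕ) (D : Finset ℕ) (bd : ℕ) : bd < freshC K hK e D bd :=
  (exists_fresh K hK e D bd).choose_spec.1

lemma freshC_not_mem (e : ℕ) (D : Finset ℕ) (bd : ℕ) : freshC K hK e D bd ∉ D :=
  (exists_fresh K hK e D bd).choose_spec.2.1

lemma freshC_spec (e : ℕ) (D : Finset ℕ) (bd : ℕ) :
    ∀ f ∈ Symm K e, ∀ d ∈ D, f (freshC K hK e D bd) ≠ d ∧ f d ≠ freshC K hK e D bd :=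
  (exists_fresh K hK e D bd).choose_spec.2.2

def coordsF (L : List (ℕ × ℕ)) : Finset ℕ :=
  (L.map Prod.fst).toFinset ∪ (L.map Prod.snd).toFinset

noncomputable def escBound (e m : ℕ) : ℕ := ((Img_finite K hK e {m}).toFinset).sup id

lemma le_escBound (e m : ℕ) (f : ℕ → ℕ) (hf : f ∈ J K e) : f m ≤ escBound K hK e m := by
  apply Finset.le_sup (f := id)
  rw [Set.Finite.mem_toFinset]
  exact ⟨f, hf, m, by simp, rfl⟩

noncomputable def dummyP (e : ℕ) (L : List (ℕ × ℕ)) : ℕ × ℕ :=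
  (freshC K hK e (coordsF L) 0,
   freshC K hK e (insert (freshC K hK e (coordsF L) 0) (coordsF L))
     (escBound K hK e (freshC K hK e (coordsF L) 0)))

noncomputable def stepPair (e : ℕ) (L : List (ℕ × ℕ)) : ℕ × ℕ :=
  if e % 3 = 0 then
    (if e / 3 ∈ L.map Prod.fst then dummyP K hK e L
     else (e / 3, freshC K hK e (insert (e / 3) (coordsF L)) 0))
  else if e % 3 = 1 then
    (if e / 3 ∈ L.map Prod.snd then dummyP K hK e L
     else (freshC K hK e (insert (e / 3) (coordsF L)) 0, e / 3))
  else dummyP K hK e L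

noncomputable def Ls : ℕ → List (ℕ × ℕ)
  | 0 => []
  | e + 1 => Ls e ++ [stepPair K hK e (Ls e)]

noncomputable def PA (e : ℕ) : ℕ := (stepPair K hK e (Ls K hK e)).1
noncomputable def PB (e : ℕ) : ℕ := (stepPair K hK e (Ls K hK e)).2

lemma Ls_eq (e : ℕ) : Ls K hK e = (List.range e).map (fun i => (PA K hK i, PB K hK i)) := by
  induction e with
  | zero => rfl
  | succ e ih =>
      show Ls K hK e ++ [stepPair K hK e (Ls K hK e)] = _
      rw [List.range_succ, List.map_append, ← ih]
      simp [PA, PB]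

noncomputable def Db (e : ℕ) : Finset ℕ := coordsF (Ls K hK e)

lemma mem_Db {e y : ℕ} : y ∈ Db K hK e ↔ ∃ i < e, y = PA K hK i ∨ y = PB K hK i := by
  simp only [Db, coordsF, Ls_eq, Finset.mem_union, List.mem_toFinset, List.mem_map,
    List.mem_range]
  constructor
  · rintro (⟨p, ⟨i, hi, rfl⟩, rfl⟩ | ⟨p, ⟨i, hi, rfl⟩, rfl⟩)
    · exact ⟨i, hi, Or.inl rfl⟩
    · exact ⟨i, hi, Or.inr rfl⟩
  · rintro ⟨i, hi, (rfl | rfl)⟩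
    · exact Or.inl ⟨_, ⟨i, hi, rfl⟩, rfl⟩
    · exact Or.inr ⟨_, ⟨i, hi, rfl⟩, rfl⟩

lemma coords_mem_Db {i e : ℕ} (h : i < e) :
    PA K hK i ∈ Db K hK e ∧ PB K hK i ∈ Db K hK e :=
  ⟨mem_Db K hK |>.mpr ⟨i, h, Or.inl rfl⟩, mem_Db K hK |>.mpr ⟨i, h, Or.inr rfl⟩⟩

lemma Db_mono {e e' : ℕ} (h : e ≤ e') : Db K hK e ⊆ Db K hK e' := by
  intro y hy
  rw [mem_Db] at *
  obtain ⟨i, hi, hy⟩ := hy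
  exact ⟨i, by omega, hy⟩

def Fr (e y : ℕ) (D : Finset ℕ) : Prop :=
  y ∉ D ∧ ∀ f ∈ Symm K e, ∀ d ∈ D, f y ≠ d ∧ f d ≠ y

lemma fr_of_fresh (e : ℕ) (D : Finset ℕ) (bd : ℕ) : Fr K e (freshC K hK e D bd) D :=
  ⟨freshC_not_mem K hK e D bd, freshC_spec K hK e D bd⟩

lemma ne_of_insert {a b : ℕ} {s : Finset ℕ} (h : b ∉ insert a s) : a ≠ b := by
  intro heq; apply h; rw [← heq]; exact Finset.mem_insert_self a s

lemma pair_spec (e : ℕ) :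
    Fr K e (PA K hK e) (insert (PB K hK e) (Db K hK e)) ∨
    Fr K e (PB K hK e) (insert (PA K hK e) (Db K hK e)) := by
  unfold PA PB stepPair
  split_ifs with h1 h2 h3 h4
  · exact Or.inr (fr_of_fresh K hK e _ _)
  · exact Or.inr (fr_of_fresh K hK e _ _)
  · exact Or.inr (fr_of_fresh K hK e _ _)
  · exact Or.inl (fr_of_fresh K hK e _ _)
  · exact Or.inr (fr_of_fresh K hK e _ _)

lemma mem_map_fst {i e : ℕ} (h : i < e) : PA K hK i ∈ (Ls K hK e).map Prod.fst := by
  rw [Ls_eq]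
  simp only [List.map_map, List.mem_map, Function.comp, List.mem_range]
  exact ⟨i, h, rfl⟩

lemma mem_map_snd {i e : ℕ} (h : i < e) : PB K hK i ∈ (Ls K hK e).map Prod.snd := by
  rw [Ls_eq]
  simp only [List.map_map, List.mem_map, Function.comp, List.mem_range]
  exact ⟨i, h, rfl⟩

lemma Db_eq_union (e : ℕ) :
    Db K hK e = ((Ls K hK e).map Prod.fst).toFinset ∪ ((Ls K hK e).map Prod.snd).toFinset := rfl

lemma fst_subset_Db {y e : ℕ} (h : y ∈ (Ls K hK e).map Prod.fst) : y ∈ Db K hK e :=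
  Finset.mem_union_left _ (List.mem_toFinset.mpr h)

lemma snd_subset_Db {y e : ℕ} (h : y ∈ (Ls K hK e).map Prod.snd) : y ∈ Db K hK e :=
  Finset.mem_union_right _ (List.mem_toFinset.mpr h)

lemma PA_not_mem_fst (e : ℕ) : PA K hK e ∉ (Ls K hK e).map Prod.fst := by
  unfold PA stepPair
  split_ifs with h1 h2 h3 h4 <;> intro hmem
  · exact freshC_not_mem K hK e _ _ (fst_subset_Db K hK hmem)
  · exact h2 hmem
  · exact freshC_not_mem K hK e _ _ (fst_subset_Db K hK hmem)
  · exact freshC_not_mem K hK e _ _ (Finset.mem_insert_of_mem (fst_subset_Db K hK hmem))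
  · exact freshC_not_mem K hK e _ _ (fst_subset_Db K hK hmem)

lemma PB_not_mem_snd (e : ℕ) : PB K hK e ∉ (Ls K hK e).map Prod.snd := by
  unfold PB stepPair
  split_ifs with h1 h2 h3 h4 <;> intro hmem
  · exact freshC_not_mem K hK e _ _ (Finset.mem_insert_of_mem (snd_subset_Db K hK hmem))
  · exact freshC_not_mem K hK e _ _ (Finset.mem_insert_of_mem (snd_subset_Db K hK hmem))
  · exact freshC_not_mem K hK e _ _ (Finset.mem_insert_of_mem (snd_subset_Db K hK hmem))
  · exact h4 hmem
  · exact freshC_not_mem K hK e _ _ (Finset.mem_insert_of_mem (snd_subset_Db K hK hmem))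

lemma PA_inj {i e : ℕ} (h : i < e) : PA K hK i ≠ PA K hK e := by
  intro heq
  exact PA_not_mem_fst K hK e (heq ▸ mem_map_fst K hK h)

lemma PB_inj {i e : ℕ} (h : i < e) : PB K hK i ≠ PB K hK e := by
  intro heq
  exact PB_not_mem_snd K hK e (heq ▸ mem_map_snd K hK h)

lemma PA_injective : Function.Injective (PA K hK) := by
  intro i j hij
  rcases lt_trichotomy i j with h | h | h
  · exact absurd hij (PA_inj K hK h)
  · exact h
  · exact absurd hij.symm (PA_inj K hK h)

lemma PB_injective : Function.Injective (PB K hK) := by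
  intro i j hij
  rcases lt_trichotomy i j with h | h | h
  · exact absurd hij (PB_inj K hK h)
  · exact h
  · exact absurd hij.symm (PB_inj K hK h)

lemma PA_ne_PB (e : ℕ) : PA K hK e ≠ PB K hK e := by
  unfold PA PB stepPair
  split_ifs with h1 h2 h3 h4
  · exact ne_of_insert (freshC_not_mem K hK e _ _)
  · exact ne_of_insert (freshC_not_mem K hK e _ _)
  · exact ne_of_insert (freshC_not_mem K hK e _ _)
  · exact (ne_of_insert (freshC_not_mem K hK e _ _)).symm
  · exact ne_of_insert (freshC_not_mem K hK e _ _)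

lemma dom_cover (a : ℕ) : ∃ e, PA K hK e = a := by
  by_cases h : a ∈ (Ls K hK (3 * a)).map Prod.fst
  · rw [Ls_eq] at h
    simp only [List.map_map, List.mem_map, Function.comp, List.mem_range] at h
    obtain ⟨i, _, hi⟩ := h
    exact ⟨i, hi⟩
  · refine ⟨3 * a, ?_⟩
    unfold PA stepPair
    have h0 : 3 * a % 3 = 0 := by omega
    have h3 : 3 * a / 3 = a := by omega
    rw [if_pos h0, h3, if_neg h]

lemma ran_cover (b : ℕ) : ∃ e, PB K hK e = b := by
  by_cases h : b ∈ (Ls K hK (3 * b + 1)).map Prod.snd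
  · rw [Ls_eq] at h
    simp only [List.map_map, List.mem_map, Function.comp, List.mem_range] at h
    obtain ⟨i, _, hi⟩ := h
    exact ⟨i, hi⟩
  · refine ⟨3 * b + 1, ?_⟩
    unfold PB stepPair
    have h0 : ¬ (3 * b + 1) % 3 = 0 := by omega
    have h1 : (3 * b + 1) % 3 = 1 := by omega
    have h3 : (3 * b + 1) / 3 = b := by omega
    rw [if_neg h0, if_pos h1, h3, if_neg h]

noncomputable def eA (a : ℕ) : ℕ := (dom_cover K hK a).choose
lemma eA_spec (a : ℕ) : PA K hK (eA K hK a) = a := (dom_cover K hK a).choose_spec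
noncomputable def eB (b : ℕ) : ℕ := (ran_cover K hK b).choose
lemma eB_spec (b : ℕ) : PB K hK (eB K hK b) = b := (ran_cover K hK b).choose_spec

noncomputable def sigma : Equiv.Perm ℕ where
  toFun a := PB K hK (eA K hK a)
  invFun b := PA K hK (eB K hK b)
  left_inv := by
    intro a
    show PA K hK (eB K hK (PB K hK (eA K hK a))) = a
    have h1 : PB K hK (eB K hK (PB K hK (eA K hK a))) = PB K hK (eA K hK a) := eB_spec K hK _
    have h2 := PB_injective K hK h1
    rw [h2]
    exact eA_spec K hK a
  right_inv := by
    intro b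
    show PB K hK (eA K hK (PA K hK (eB K hK b))) = b
    have h1 : PA K hK (eA K hK (PA K hK (eB K hK b))) = PA K hK (eB K hK b) := eA_spec K hK _
    have h2 := PA_injective K hK h1
    rw [h2]
    exact eB_spec K hK b

lemma sigma_PA (e : ℕ) : sigma K hK (PA K hK e) = PB K hK e := by
  show PB K hK (eA K hK (PA K hK e)) = PB K hK e
  congr 1
  exact PA_injective K hK (eA_spec K hK _)

lemma sigma_inv_PB (e : ℕ) : (sigma K hK)⁻¹ (PB K hK e) = PA K hK e := by
  have : (sigma K hK)⁻¹ (sigma K hK (PA K hK e)) = PA K hK e := (sigma K hK).symm_apply_apply _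
  rw [sigma_PA] at this
  exact this

lemma sigma_not_memK (n : ℕ) : ⇑(sigma K hK) ∉ K n := by
  intro hmem
  set e := 3 * n + 2 with he
  have h0 : ¬ e % 3 = 0 := by omega
  have h1 : ¬ e % 3 = 1 := by omega
  have hPA : PA K hK e = freshC K hK e (coordsF (Ls K hK e)) 0 := by
    unfold PA stepPair; rw [if_neg h0, if_neg h1]; rfl
  have hPB : PB K hK e = freshC K hK e
      (insert (freshC K hK e (coordsF (Ls K hK e)) 0) (coordsF (Ls K hK e)))
      (escBound K hK e (freshC K hK e (coordsF (Ls K hK e)) 0)) := by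
    unfold PB stepPair; rw [if_neg h0, if_neg h1]; rfl
  have hgt : escBound K hK e (PA K hK e) < PB K hK e := by
    rw [hPA, hPB]; exact freshC_gt K hK _ _ _
  have hle : sigma K hK (PA K hK e) ≤ escBound K hK e (PA K hK e) :=
    le_escBound K hK e _ _ (mem_J_of K (by omega) hmem)
  rw [sigma_PA] at hle
  omega

lemma keyA {ρ y z e' : ℕ}
    (hF : Fr K ρ y (insert z (Db K hK ρ)))
    (he' : e' ≤ ρ) (hy : y = PA K hK e' ∨ y = PB K hK e') : e' = ρ := by
  rcases he'.lt_or_eq with h | h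
  · exfalso
    apply hF.1
    apply Finset.mem_insert_of_mem
    rcases hy with rfl | rfl
    · exact (coords_mem_Db K hK h).1
    · exact (coords_mem_Db K hK h).2
  · exact h

lemma keyB {ρ y z : ℕ}
    (hpair : (PA K hK ρ = y ∧ PB K hK ρ = z) ∨ (PA K hK ρ = z ∧ PB K hK ρ = y))
    (hF : Fr K ρ y (insert z (Db K hK ρ)))
    {f : ℕ → ℕ} (hf : f ∈ Symm K ρ) (hfy : f y ≠ y) {e' : ℕ} (he' : e' ≤ ρ) :
    f y ≠ PA K hK e' ∧ f y ≠ PB K hK e' := by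
  have hz : f y ≠ z := (hF.2 f hf z (Finset.mem_insert_self _ _)).1
  rcases he'.lt_or_eq with h | h
  · constructor
    · exact (hF.2 f hf _ (Finset.mem_insert_of_mem (coords_mem_Db K hK h).1)).1
    · exact (hF.2 f hf _ (Finset.mem_insert_of_mem (coords_mem_Db K hK h).2)).1
  · subst h
    rcases hpair with ⟨h1, h2⟩ | ⟨h1, h2⟩
    · exact ⟨h1 ▸ hfy, h2 ▸ hz⟩
    · exact ⟨h1 ▸ hz, h2 ▸ hfy⟩

end Construction

section Words

noncomputable def sp (b : Bool) : Equiv.Perm ℕ := if b then sigma K hK else (sigma K hK)⁻¹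

lemma sp_true : sp K hK true = sigma K hK := rfl
lemma sp_false : sp K hK false = (sigma K hK)⁻¹ := rfl

noncomputable def stepIdx (b : Bool) (y : ℕ) : ℕ := if b then eA K hK y else eB K hK y

lemma stepIdx_true (y : ℕ) :
    PA K hK (stepIdx K hK true y) = y ∧ PB K hK (stepIdx K hK true y) = sigma K hK y := by
  refine ⟨eA_spec K hK y, ?_⟩
  show PB K hK (eA K hK y) = _
  rw [← sigma_PA K hK, eA_spec K hK]

lemma stepIdx_false (y : ℕ) :
    PB K hK (stepIdx K hK false y) = y ∧ PA K hK (stepIdx K hK false y) = (sigma K hK)⁻¹ y := by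
  refine ⟨eB_spec K hK y, ?_⟩
  show PA K hK (eB K hK y) = _
  rw [← sigma_inv_PB K hK, eB_spec K hK]

noncomputable def wEval (ε : ℕ → Bool) (gs : ℕ → Equiv.Perm ℕ) : ℕ → Equiv.Perm ℕ
  | 0 => gs 0
  | i + 1 => gs (i + 1) * sp K hK (ε (i + 1)) * wEval ε gs i

noncomputable def aF (ε : ℕ → Bool) (gs : ℕ → Equiv.Perm ℕ) (i x : ℕ) : ℕ :=
  wEval K hK ε gs i x

noncomputable def bF (ε : ℕ → Bool) (gs : ℕ → Equiv.Perm ℕ) (i x : ℕ) : ℕ :=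
  sp K hK (ε (i + 1)) (aF K hK ε gs i x)

noncomputable def stepE (ε : ℕ → Bool) (gs : ℕ → Equiv.Perm ℕ) (x i : ℕ) : ℕ :=
  stepIdx K hK (ε (i + 1)) (aF K hK ε gs i x)

variable {ε : ℕ → Bool} {gs : ℕ → Equiv.Perm ℕ}

lemma aF_zero (x : ℕ) : aF K hK ε gs 0 x = gs 0 x := rfl

lemma aF_succ (i x : ℕ) :
    aF K hK ε gs (i + 1) x = gs (i + 1) (bF K hK ε gs i x) := by
  simp only [aF, bF, wEval, Equiv.Perm.mul_apply]

lemma step_dir_t {i : ℕ} (h : ε (i + 1) = true) (x : ℕ) :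
    PA K hK (stepE K hK ε gs x i) = aF K hK ε gs i x ∧
    PB K hK (stepE K hK ε gs x i) = bF K hK ε gs i x := by
  unfold stepE bF
  rw [h, sp_true]
  exact stepIdx_true K hK _

lemma step_dir_f {i : ℕ} (h : ε (i + 1) = false) (x : ℕ) :
    PB K hK (stepE K hK ε gs x i) = aF K hK ε gs i x ∧
    PA K hK (stepE K hK ε gs x i) = bF K hK ε gs i x := by
  unfold stepE bF
  rw [h, sp_false]
  exact stepIdx_false K hK _

lemma dep_mem (i x : ℕ) :
    aF K hK ε gs i x = PA K hK (stepE K hK ε gs x i) ∨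
    aF K hK ε gs i x = PB K hK (stepE K hK ε gs x i) := by
  cases h : ε (i + 1)
  · exact Or.inr (step_dir_f K hK (gs := gs) h x).1.symm
  · exact Or.inl (step_dir_t K hK (gs := gs) h x).1.symm

lemma land_mem (i x : ℕ) :
    bF K hK ε gs i x = PA K hK (stepE K hK ε gs x i) ∨
    bF K hK ε gs i x = PB K hK (stepE K hK ε gs x i) := by
  cases h : ε (i + 1)
  · exact Or.inl (step_dir_f K hK (gs := gs) h x).2.symm
  · exact Or.inr (step_dir_t K hK (gs := gs) h x).2.symm

lemma aF_injective (i : ℕ) : Function.Injective (fun x => aF K hK ε gs i x) :=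
  (wEval K hK ε gs i).injective

lemma bF_injective (i : ℕ) : Function.Injective (fun x => bF K hK ε gs i x) :=
  (sp K hK (ε (i + 1))).injective.comp (aF_injective K hK i)

variable {G : Subgroup (Equiv.Perm ℕ)}

lemma mem_symm_of (hsub : ∀ g ∈ G, ⇑g ∈ ⋃ n, K n) {g : Equiv.Perm ℕ} (hg : g ∈ G) :
    ∃ n, ∀ e, n ≤ e → ⇑g ∈ Symm K e := by
  obtain ⟨a, ha⟩ : ∃ a, ⇑g ∈ K a := by
    simpa only [Set.mem_iUnion] using hsub g hg
  obtain ⟨b, hb⟩ : ∃ b, ⇑g⁻¹ ∈ K b := by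
    simpa only [Set.mem_iUnion] using hsub g⁻¹ (inv_mem hg)
  refine ⟨max a b, fun e he => ⟨mem_J_of K (le_trans (le_max_left a b) he) ha,
    ⇑g⁻¹, mem_J_of K (le_trans (le_max_right a b) he) hb, ?_, ?_⟩⟩
  · intro x; exact g.symm_apply_apply x
  · intro x; exact g.apply_symm_apply x

theorem word_lemma (hG : Cofinitary G) (hsub : ∀ g ∈ G, ⇑g ∈ ⋃ n, K n)
    (k : ℕ) (hk : 1 ≤ k) (ε : ℕ → Bool) (gs : ℕ → Equiv.Perm ℕ)
    (hgs : ∀ i, gs i ∈ G)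
    (Ha : ∀ i, 1 ≤ i → i < k → ε (i + 1) = !ε i → gs i ≠ 1)
    (Hb : ε 1 = !ε k → gs 0 * gs k ≠ 1) :
    {x : ℕ | wEval K hK ε gs k x = x}.Finite := by
  classical
  -- Symm levels
  have hlev : ∀ g : Equiv.Perm ℕ, g ∈ G → ∃ n, ∀ e, n ≤ e →
      ⇑g ∈ Symm K e ∧ ⇑g⁻¹ ∈ Symm K e := by
    intro g hg
    obtain ⟨n1, h1⟩ := mem_symm_of K hsub hg
    obtain ⟨n2, h2⟩ := mem_symm_of K hsub (inv_mem hg)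
    exact ⟨max n1 n2, fun e he => ⟨h1 e (le_trans (le_max_left _ _) he),
      h2 e (le_trans (le_max_right _ _) he)⟩⟩
  set c : Equiv.Perm ℕ := gs 0 * gs k with hc_def
  have hcG : c ∈ G := mul_mem (hgs 0) (hgs k)
  choose N hN using fun i => hlev (gs i) (hgs i)
  obtain ⟨Nc, hNc⟩ := hlev c hcG
  set S : ℕ := max ((Finset.range (k + 1)).sup N) Nc with hS_def
  have hSi : ∀ i ≤ k, ∀ e, S < e → ⇑(gs i) ∈ Symm K e ∧ ⇑(gs i)⁻¹ ∈ Symm K e := by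
    intro i hi e he
    apply hN i e
    have : N i ≤ (Finset.range (k + 1)).sup N :=
      Finset.le_sup (Finset.mem_range.mpr (by omega))
    omega
  have hSc : ∀ e, S < e → ⇑c ∈ Symm K e ∧ ⇑c⁻¹ ∈ Symm K e := by
    intro e he
    apply hNc e
    have : Nc ≤ S := le_max_right _ _
    omega
  -- exceptional set
  set Fstar : Set ℕ :=
    {v | ∃ i, 1 ≤ i ∧ i < k ∧ gs i ≠ 1 ∧ gs i v = v} ∪ {v | c ≠ 1 ∧ c v = v} with hFstar_def
  have hFstarFin : Fstar.Finite := by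
    apply Set.Finite.union
    · have hsub2 : {v | ∃ i, 1 ≤ i ∧ i < k ∧ gs i ≠ 1 ∧ gs i v = v} ⊆
          ⋃ i ∈ Finset.Ico 1 k, {v | gs i ≠ 1 ∧ gs i v = v} := by
        rintro v ⟨i, h1, h2, h3, h4⟩
        exact Set.mem_biUnion (Finset.mem_Ico.mpr ⟨h1, h2⟩) ⟨h3, h4⟩
      refine Set.Finite.subset ?_ hsub2
      apply Set.Finite.biUnion (Finset.Ico 1 k).finite_toSet
      intro i _
      by_cases hgi : gs i = 1
      · convert Set.finite_empty using 1
        ext v; simp [hgi]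
      · exact Set.Finite.subset (hG (gs i) (hgs i) hgi) (fun v hv => hv.2)
    · by_cases hc1 : c = 1
      · convert Set.finite_empty using 1
        ext v; simp [hc1]
      · exact Set.Finite.subset (hG c hcG hc1) (fun v hv => hv.2)
  set E : Set ℕ :=
    (fun x => aF K hK ε gs 0 x) ⁻¹' (↑(Db K hK (S + 1)) : Set ℕ) ∪
    (fun x => aF K hK ε gs 0 x) ⁻¹' Fstar ∪
    ⋃ i ∈ Finset.range k, (fun x => bF K hK ε gs i x) ⁻¹' Fstar with hE_def
  have hEFin : E.Finite := by
    apply Set.Finite.union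
    apply Set.Finite.union
    · exact Set.Finite.preimage ((aF_injective K hK 0).injOn) (Db K hK (S + 1)).finite_toSet
    · exact Set.Finite.preimage ((aF_injective K hK 0).injOn) hFstarFin
    · apply Set.Finite.biUnion (Finset.range k).finite_toSet
      intro i _
      exact Set.Finite.preimage ((bF_injective K hK i).injOn) hFstarFin
  refine Set.Finite.subset hEFin ?_
  intro x hx
  by_contra hxE
  have hnE1 : aF K hK ε gs 0 x ∉ (↑(Db K hK (S + 1)) : Set ℕ) := by
    intro h; exact hxE (Or.inl (Or.inl h))
  have hnE2 : aF K hK ε gs 0 x ∉ Fstar := by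
    intro h; exact hxE (Or.inl (Or.inr h))
  have hnE3 : ∀ i < k, bF K hK ε gs i x ∉ Fstar := by
    intro i hi h
    exact hxE (Or.inr (Set.mem_biUnion (Finset.mem_range.mpr hi) h))
  have hax : aF K hK ε gs k x = x := hx
  -- the maximal step
  have hne : (Finset.range k).Nonempty := ⟨0, Finset.mem_range.mpr (by omega)⟩
  obtain ⟨istar, histar, hsup⟩ :=
    Finset.exists_mem_eq_sup (Finset.range k) hne (stepE K hK ε gs x)
  set ρ : ℕ := (Finset.range k).sup (stepE K hK ε gs x) with hρ_def
  have histark : istar < k := Finset.mem_range.mp histar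
  have hle : ∀ j, j < k → stepE K hK ε gs x j ≤ ρ := by
    intro j hj
    exact Finset.le_sup (Finset.mem_range.mpr hj)
  -- low case
  rcases le_or_gt ρ S with hρS | hρS
  · apply hnE1
    have h0 : stepE K hK ε gs x 0 < S + 1 := by
      have := hle 0 (by omega); omega
    rcases dep_mem K hK 0 x with h | h
    · rw [h]; exact_mod_cast (coords_mem_Db K hK h0).1
    · rw [h]; exact_mod_cast (coords_mem_Db K hK h0).2
  -- high case
  have hstep : stepE K hK ε gs x istar = ρ := hsup.symm
  set dep := aF K hK ε gs istar x with hdep_def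
  set land := bF K hK ε gs istar x with hland_def
  have hpairdir :
      (PA K hK ρ = dep ∧ PB K hK ρ = land ∧ ε (istar + 1) = true) ∨
      (PB K hK ρ = dep ∧ PA K hK ρ = land ∧ ε (istar + 1) = false) := by
    cases h : ε (istar + 1)
    · right
      have := step_dir_f K hK (gs := gs) h x
      rw [hstep] at this
      exact ⟨this.1, this.2, rfl⟩
    · left
      have := step_dir_t K hK (gs := gs) h x
      rw [hstep] at this
      exact ⟨this.1, this.2, rfl⟩
  have hpair : (PA K hK ρ = dep ∧ PB K hK ρ = land) ∨
      (PA K hK ρ = land ∧ PB K hK ρ = dep) := by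
    rcases hpairdir with ⟨h1, h2, _⟩ | ⟨h1, h2, _⟩
    · exact Or.inl ⟨h1, h2⟩
    · exact Or.inr ⟨h2, h1⟩
  have hAB := PA_ne_PB K hK ρ
  have hFr : Fr K ρ dep (insert land (Db K hK ρ)) ∨
      Fr K ρ land (insert dep (Db K hK ρ)) := by
    rcases pair_spec K hK ρ with h | h <;> rcases hpair with ⟨h1, h2⟩ | ⟨h1, h2⟩
    · left; rw [h1, h2] at h; exact h
    · right; rw [h1, h2] at h; exact h
    · right; rw [h1, h2] at h; exact h
    · left; rw [h1, h2] at h; exact h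
  rcases hFr with hFrD | hFrL
  · -- departure point of the maximal step is the fresh coordinate
    rcases Nat.eq_zero_or_pos istar with hi0 | hi0
    · -- istar = 0 : wrap-around case
      subst hi0
      obtain ⟨m, rfl⟩ : ∃ m, k = m + 1 := ⟨k - 1, by omega⟩
      have h1 : gs (m + 1) (bF K hK ε gs m x) = x := by
        rw [← aF_succ K hK m x]; exact hax
      have h2 : dep = gs 0 x := hdep_def
      have hbm0 : bF K hK ε gs m x = ⇑(gs (m + 1))⁻¹ x := by
        apply (gs (m + 1)).injective
        rw [h1, Equiv.Perm.coe_inv, Equiv.apply_symm_apply]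
      have h3 : ⇑c⁻¹ dep = ⇑(gs (m + 1))⁻¹ x := by
        rw [h2]
        simp [hc_def, mul_inv_rev, Equiv.Perm.mul_apply, Equiv.Perm.coe_inv, Equiv.symm_apply_apply]
      have hbm : bF K hK ε gs m x = ⇑c⁻¹ dep := by rw [hbm0, h3]
      by_cases hfix : ⇑c⁻¹ dep = dep
      · by_cases hc1 : c = 1
        · -- full backtrack forces a cyclic cancellation, contradicting Hb
          have hbm' : bF K hK ε gs m x = dep := by rw [hbm, hfix]
          have hρm : stepE K hK ε gs x m = ρ :=
            keyA K hK hFrD (hle m (by omega))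
              (by rw [← hbm']; exact land_mem K hK m x)
          rcases hpairdir with ⟨hA, hB, hε1⟩ | ⟨hA, hB, hε1⟩
          · have hε1' : ε 1 = true := hε1
            cases hεm : ε (m + 1)
            · exact Hb (by simp [hε1', hεm]) hc1
            · have hPB := (step_dir_t K hK (gs := gs) hεm x).2
              rw [hρm] at hPB
              exact hAB (by rw [hA, hPB, hbm'])
          · have hε1' : ε 1 = false := hε1
            cases hεm : ε (m + 1)
            · have hPA := (step_dir_f K hK (gs := gs) hεm x).2
              rw [hρm] at hPA
              exact hAB (by rw [hPA, hbm', hA])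
            · exact Hb (by simp [hε1', hεm]) hc1
        · -- dep is a fixed point of the nontrivial c
          have hcdep : ⇑c dep = dep := by
            nth_rewrite 1 [← hfix]
            exact c.apply_symm_apply dep
          apply hnE2
          rw [show aF K hK ε gs 0 x = dep from hdep_def.symm]
          exact Set.mem_union_right _ ⟨hc1, hcdep⟩
      · -- freshness contradiction
        have hkB := keyB K hK hpair hFrD (hSc ρ hρS).2 hfix (hle m (by omega))
        rcases land_mem K hK m x with h | h
        · exact hkB.1 (by rw [← hbm]; exact h)
        · exact hkB.2 (by rw [← hbm]; exact h)
    · -- istar ≥ 1 : interior cancellation case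
      obtain ⟨j, rfl⟩ : ∃ j, istar = j + 1 := ⟨istar - 1, by omega⟩
      have hdep2 : dep = gs (j + 1) (bF K hK ε gs j x) := by
        rw [hdep_def]; exact aF_succ K hK j x
      have hbj : bF K hK ε gs j x = ⇑(gs (j + 1))⁻¹ dep := by
        apply (gs (j + 1)).injective
        rw [Equiv.Perm.coe_inv, Equiv.apply_symm_apply, hdep2]
      by_cases hfix : ⇑(gs (j + 1))⁻¹ dep = dep
      · by_cases hg1 : gs (j + 1) = 1
        · have hbj' : bF K hK ε gs j x = dep := by rw [hbj, hfix]
          have hρj : stepE K hK ε gs x j = ρ :=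
            keyA K hK hFrD (hle j (by omega))
              (by rw [← hbj']; exact land_mem K hK j x)
          rcases hpairdir with ⟨hA, hB, hεi⟩ | ⟨hA, hB, hεi⟩
          · cases hεj : ε (j + 1)
            · exact Ha (j + 1) (by omega) histark (by simp [hεi, hεj]) hg1
            · have hPB := (step_dir_t K hK (gs := gs) hεj x).2
              rw [hρj] at hPB
              exact hAB (by rw [hA, hPB, hbj'])
          · cases hεj : ε (j + 1)
            · have hPA := (step_dir_f K hK (gs := gs) hεj x).2
              rw [hρj] at hPA
              exact hAB (by rw [hPA, hbj', hA])
            · exact Ha (j + 1) (by omega) histark (by simp [hεi, hεj]) hg1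
        · have hgdep : gs (j + 1) dep = dep := by
            nth_rewrite 1 [← hfix]
            exact (gs (j + 1)).apply_symm_apply dep
          apply hnE3 j (by omega)
          have hbj' : bF K hK ε gs j x = dep := by rw [hbj, hfix]
          rw [hbj']
          exact Set.mem_union_left _ ⟨j + 1, by omega, histark, hg1, hgdep⟩
      · have hkB := keyB K hK hpair hFrD (hSi (j + 1) (by omega) ρ hρS).2 hfix
          (hle j (by omega))
        rcases land_mem K hK j x with h | h
        · exact hkB.1 (by rw [← hbj]; exact h)
        · exact hkB.2 (by rw [← hbj]; exact h)
  · -- landing point of the maximal step is the fresh coordinate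
    rcases Nat.lt_or_ge (istar + 1) k with hik | hik
    · -- there is a next step
      have hanext : aF K hK ε gs (istar + 1) x = gs (istar + 1) land := by
        rw [aF_succ K hK istar x, ← hland_def]
      by_cases hfix : ⇑(gs (istar + 1)) land = land
      · by_cases hg1 : gs (istar + 1) = 1
        · have h1 : aF K hK ε gs (istar + 1) x = land := by rw [hanext, hfix]
          have hρn : stepE K hK ε gs x (istar + 1) = ρ :=
            keyA K hK hFrL (hle (istar + 1) hik)
              (by rw [← h1]; exact dep_mem K hK (istar + 1) x)
          rcases hpairdir with ⟨hA, hB, hεi⟩ | ⟨hA, hB, hεi⟩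
          · cases hεn : ε (istar + 1 + 1)
            · exact Ha (istar + 1) (by omega) hik (by simp [hεn, hεi]) hg1
            · have hPA := (step_dir_t K hK (gs := gs) hεn x).1
              rw [hρn, h1] at hPA
              exact hAB (by rw [hPA, ← hB])
          · cases hεn : ε (istar + 1 + 1)
            · have hPB := (step_dir_f K hK (gs := gs) hεn x).1
              rw [hρn, h1] at hPB
              exact hAB (by rw [hB, ← hPB])
            · exact Ha (istar + 1) (by omega) hik (by simp [hεn, hεi]) hg1
        · apply hnE3 istar histark
          rw [show bF K hK ε gs istar x = land from hland_def.symm]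
          exact Set.mem_union_left _ ⟨istar + 1, by omega, hik, hg1, hfix⟩
      · have hkB := keyB K hK (Or.symm hpair) hFrL
          (hSi (istar + 1) (by omega) ρ hρS).1 hfix (hle (istar + 1) hik)
        rcases dep_mem K hK (istar + 1) x with h | h
        · exact hkB.1 (by rw [← hanext]; exact h)
        · exact hkB.2 (by rw [← hanext]; exact h)
    · -- the maximal step is the last one : wrap-around
      have hik' : istar + 1 = k := by omega
      have hxl : gs (istar + 1) land = x := by
        rw [← hland_def.symm]
        rw [← aF_succ K hK istar x, hik']
        exact hax
      have ha0 : aF K hK ε gs 0 x = ⇑c land := by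
        have hcland : (⇑c) land = gs 0 (gs k land) := by
          simp [hc_def, Equiv.Perm.mul_apply]
        rw [hcland, ← hik', hxl]
        exact aF_zero K hK x
      by_cases hfix : ⇑c land = land
      · by_cases hc1 : c = 1
        · have h1 : aF K hK ε gs 0 x = land := by rw [ha0, hfix]
          have hρ0 : stepE K hK ε gs x 0 = ρ :=
            keyA K hK hFrL (hle 0 (by omega))
              (by rw [← h1]; exact dep_mem K hK 0 x)
          rcases hpairdir with ⟨hA, hB, hεi⟩ | ⟨hA, hB, hεi⟩
          · cases hε1 : ε (0 + 1)
            · have hε1' : ε 1 = false := hε1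
              have hεk : ε k = true := by rw [← hik']; exact hεi
              exact Hb (by simp [hε1', hεk]) hc1
            · have hPA := (step_dir_t K hK (gs := gs) hε1 x).1
              rw [hρ0, h1] at hPA
              exact hAB (by rw [hPA, ← hB])
          · cases hε1 : ε (0 + 1)
            · have hPB := (step_dir_f K hK (gs := gs) hε1 x).1
              rw [hρ0, h1] at hPB
              exact hAB (by rw [hB, ← hPB])
            · have hε1' : ε 1 = true := hε1
              have hεk : ε k = false := by rw [← hik']; exact hεi
              exact Hb (by simp [hε1', hεk]) hc1
        · apply hnE3 istar histark
          rw [show bF K hK ε gs istar x = land from hland_def.symm]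
          exact Set.mem_union_right _ ⟨hc1, hfix⟩
      · have hkB := keyB K hK (Or.symm hpair) hFrL (hSc ρ hρS).1 hfix (hle 0 (by omega))
        rcases dep_mem K hK 0 x with h | h
        · exact hkB.1 (by rw [← ha0]; exact h)
        · exact hkB.2 (by rw [← ha0]; exact h)

end Words

section Lists

def Fix (h : Equiv.Perm ℕ) : Set ℕ := {n | h n = n}

lemma fix_conj (p h : Equiv.Perm ℕ) : Fix (p * h * p⁻¹) = (⇑p) '' Fix h := by
  ext n
  constructor
  · intro hn
    refine ⟨p⁻¹ n, ?_, p.apply_symm_apply n⟩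
    have h1 : p (h (p⁻¹ n)) = n := hn
    have h2 : p (p⁻¹ n) = n := p.apply_symm_apply n
    exact p.injective (by rw [h1, h2])
  · rintro ⟨m, hm, rfl⟩
    show p (h (p⁻¹ (p m))) = p m
    rw [Equiv.Perm.coe_inv, Equiv.symm_apply_apply, hm]

lemma sp_inv (e : Bool) : (sp K hK e)⁻¹ = sp K hK (!e) := by
  cases e <;> simp [sp]

lemma wEval_congr {ε1 ε2 : ℕ → Bool} {gs1 gs2 : ℕ → Equiv.Perm ℕ} :
    ∀ k, (∀ i, i ≤ k → ε1 i = ε2 i) → (∀ i, i ≤ k → gs1 i = gs2 i) →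
    wEval K hK ε1 gs1 k = wEval K hK ε2 gs2 k := by
  intro k
  induction k with
  | zero => intro _ hg; exact hg 0 le_rfl
  | succ k ih =>
      intro he hg
      show gs1 (k+1) * sp K hK (ε1 (k+1)) * wEval K hK ε1 gs1 k = _
      rw [hg (k+1) le_rfl, he (k+1) le_rfl,
        ih (fun i hi => he i (by omega)) (fun i hi => hg i (by omega))]
      rfl

variable {G : Subgroup (Equiv.Perm ℕ)}

def Red (G : Subgroup (Equiv.Perm ℕ)) (p q : Equiv.Perm ℕ) : Prop :=
  (p ∈ G ∧ q ∈ G) ∨ ((p = sigma K hK ∨ p = (sigma K hK)⁻¹) ∧ q = p⁻¹)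

def Ok (G : Subgroup (Equiv.Perm ℕ)) (l : List (Equiv.Perm ℕ)) : Prop :=
  ∀ p ∈ l, p ∈ G ∨ p = sigma K hK ∨ p = (sigma K hK)⁻¹

noncomputable def cntS (G : Subgroup (Equiv.Perm ℕ)) (l : List (Equiv.Perm ℕ)) : ℕ :=
  l.countP (fun p => decide (p ∉ G))

lemma letter_sp {p : Equiv.Perm ℕ} (h : p = sigma K hK ∨ p = (sigma K hK)⁻¹) :
    ∃ e, p = sp K hK e := by
  rcases h with rfl | rfl
  · exact ⟨true, rfl⟩
  · exact ⟨false, rfl⟩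

lemma cntS_cons_G {p : Equiv.Perm ℕ} (hp : p ∈ G) (l : List (Equiv.Perm ℕ)) :
    cntS G (p :: l) = cntS G l := by
  simp [cntS, List.countP_cons, hp]

lemma cntS_cons_nG {p : Equiv.Perm ℕ} (hp : p ∉ G) (l : List (Equiv.Perm ℕ)) :
    cntS G (p :: l) = cntS G l + 1 := by
  simp [cntS, List.countP_cons, hp]

lemma cntS_append (u v : List (Equiv.Perm ℕ)) :
    cntS G (u ++ v) = cntS G u + cntS G v := by
  simp [cntS, List.countP_append]

lemma cntS_zero_mem {l : List (Equiv.Perm ℕ)} (h : cntS G l = 0)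
    {p : Equiv.Perm ℕ} (hp : p ∈ l) : p ∈ G := by
  by_contra hpG
  obtain ⟨u, v, rfl⟩ := List.append_of_mem hp
  rw [cntS_append] at h
  rw [cntS_cons_nG hpG] at h
  omega

lemma cntS_pos {l : List (Equiv.Perm ℕ)} {p : Equiv.Perm ℕ} (hp : p ∈ l) (hpG : p ∉ G) :
    1 ≤ cntS G l := by
  obtain ⟨u, v, rfl⟩ := List.append_of_mem hp
  rw [cntS_append, cntS_cons_nG hpG]
  omega

lemma not_chain'_decomp {α : Type*} {R : α → α → Prop} :
    ∀ l : List α, ¬ List.Chain' R l → ∃ u p q v, l = u ++ p :: q :: v ∧ ¬ R p q := by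
  intro l
  induction l with
  | nil => intro h; exact absurd List.isChain_nil h
  | cons a t ih =>
      intro h
      cases t with
      | nil => exact absurd (List.isChain_singleton a) h
      | cons b t' =>
          unfold List.Chain' at h
          rw [List.isChain_cons_cons] at h
          push_neg at h
          by_cases hab : R a b
          · obtain ⟨u, p, q, v, heq, hR⟩ := ih (h hab)
            exact ⟨a :: u, p, q, v, by rw [heq]; rfl, hR⟩
          · exact ⟨[], a, b, t', rfl, hab⟩

theorem conv (hsub : ∀ g ∈ G, ⇑g ∈ ⋃ n, K n) :
    ∀ (n : ℕ) (l : List (Equiv.Perm ℕ)), l.length ≤ n → Ok K hK G l →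
    (1 : Equiv.Perm ℕ) ∉ l → List.Chain' (fun p q => ¬ Red K hK G p q) l →
    1 ≤ cntS G l →
    ∃ (k : ℕ) (ε : ℕ → Bool) (gs : ℕ → Equiv.Perm ℕ), 1 ≤ k ∧ (∀ i, gs i ∈ G) ∧
      l.prod = wEval K hK ε gs k ∧
      (∀ i, 1 ≤ i → i < k → ε (i + 1) = !ε i → gs i ≠ 1) ∧
      ((gs k = 1 ∧ ∃ t, l = sp K hK (ε k) :: t) ∨
        (gs k ≠ 1 ∧ ∃ t, l = gs k :: sp K hK (ε k) :: t)) ∧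
      ((gs 0 = 1 ∧ ∃ t, l = t ++ [sp K hK (ε 1)]) ∨
        (gs 0 ≠ 1 ∧ ∃ t, l = t ++ [sp K hK (ε 1), gs 0])) := by
  intro n
  induction n with
  | zero =>
      intro l hlen _ _ _ hcnt
      have hl : l = [] := List.length_eq_zero_iff.mp (by omega)
      subst hl
      simp [cntS] at hcnt
  | succ n IH =>
      intro l hlen hok hone hch hcnt
      cases l with
      | nil => simp [cntS] at hcnt
      | cons p t =>
          rcases hok p (List.mem_cons_self) with hpG | hpσ
          · -- leading G letter
            have hp1 : p ≠ 1 := fun h => hone (by rw [← h]; exact List.mem_cons_self)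
            have hcnt' : 1 ≤ cntS G t := by
              rw [cntS_cons_G hpG] at hcnt; exact hcnt
            obtain ⟨k, ε, gs, hk, hmem, hprod, Ha, Hhead, Hlast⟩ :=
              IH t (by simp at hlen; omega)
                (fun q hq => hok q (List.mem_cons_of_mem p hq))
                (fun h => hone (List.mem_cons_of_mem p h))
                (List.IsChain.tail hch) hcnt'
            -- the head of t must be a sigma letter
            rcases Hhead with ⟨hgk, t2, ht2⟩ | ⟨hgk, t2, ht2⟩
            · -- ok : absorb p into gs k
              refine ⟨k, ε, Function.update gs k p, hk, ?_, ?_, ?_, ?_, ?_⟩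
              · intro i
                by_cases hik : i = k
                · rw [hik, Function.update_self]; exact hpG
                · rw [Function.update_of_ne hik]; exact hmem i
              · -- product
                obtain ⟨k0, rfl⟩ : ∃ k0, k = k0 + 1 := ⟨k - 1, by omega⟩
                have hupd : wEval K hK ε (Function.update gs (k0 + 1) p) k0 =
                    wEval K hK ε gs k0 := by
                  apply wEval_congr
                  · intro i _; rfl
                  · intro i hi; exact Function.update_of_ne (by omega) _ _
                show (p :: t).prod = Function.update gs (k0+1) p (k0+1) *
                  sp K hK (ε (k0+1)) * wEval K hK ε (Function.update gs (k0+1) p) k0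
                rw [hupd, Function.update_self, List.prod_cons, hprod]
                show p * (gs (k0+1) * sp K hK (ε (k0+1)) * wEval K hK ε gs k0) = _
                rw [hgk]
                group
              · intro i h1 h2 hee
                rw [Function.update_of_ne (by omega)]
                exact Ha i h1 h2 hee
              · right
                refine ⟨by rw [Function.update_self]; exact hp1, t2, ?_⟩
                rw [Function.update_self, ht2]
              · rcases Hlast with ⟨hg0, t3, ht3⟩ | ⟨hg0, t3, ht3⟩
                · left
                  refine ⟨by rw [Function.update_of_ne (by omega)]; exact hg0, p :: t3, ?_⟩
                  rw [ht3]; rfl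
                · right
                  refine ⟨by rw [Function.update_of_ne (by omega)]; exact hg0, p :: t3, ?_⟩
                  rw [Function.update_of_ne (by omega), ht3]; rfl
            · -- impossible : two adjacent G letters
              exfalso
              rw [ht2] at hch
              have := (List.isChain_cons_cons.mp hch).1
              exact this (Or.inl ⟨hpG, hmem k⟩)
          · -- leading sigma letter
            obtain ⟨e, rfl⟩ := letter_sp K hK hpσ
            by_cases hcnt0 : cntS G t = 0
            · -- t is all G letters, hence [] or [γ]
              have htshort : t = [] ∨ ∃ γ, t = [γ] := by
                cases t with
                | nil => exact Or.inl rfl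
                | cons a t' =>
                    cases t' with
                    | nil => exact Or.inr ⟨a, rfl⟩
                    | cons b t'' =>
                        exfalso
                        have haG : a ∈ G := cntS_zero_mem hcnt0 (by simp)
                        have hbG : b ∈ G := cntS_zero_mem hcnt0 (by simp)
                        have := (List.isChain_cons_cons.mp (List.IsChain.tail hch)).1
                        exact this (Or.inl ⟨haG, hbG⟩)
              rcases htshort with rfl | ⟨γ, rfl⟩
              · refine ⟨1, fun _ => e, fun _ => 1, le_rfl, fun _ => one_mem G, ?_, ?_, ?_, ?_⟩
                · show (sp K hK e) * List.prod [] = (1 : Equiv.Perm ℕ) * sp K hK e * 1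
                  simp
                · intro i h1 h2; omega
                · left; exact ⟨rfl, [], rfl⟩
                · left; exact ⟨rfl, [], rfl⟩
              · have hγG : γ ∈ G := cntS_zero_mem hcnt0 (by simp)
                have hγ1 : γ ≠ 1 := fun h => hone (by rw [← h]; simp)
                refine ⟨1, fun _ => e, fun i => if i = 0 then γ else 1, le_rfl, ?_, ?_, ?_, ?_, ?_⟩
                · intro i; by_cases h : i = 0 <;> simp [h, hγG, one_mem]
                · show (sp K hK e) * List.prod [γ] = _
                  simp [wEval]
                · intro i h1 h2; omega
                · left; exact ⟨rfl, [γ], rfl⟩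
                · right; exact ⟨by simpa using hγ1, [], by simp⟩
            · -- recurse and prepend a sigma letter
              have hcnt' : 1 ≤ cntS G t := by omega
              obtain ⟨k, ε, gs, hk, hmem, hprod, Ha, Hhead, Hlast⟩ :=
                IH t (by simp at hlen; omega)
                  (fun q hq => hok q (List.mem_cons_of_mem _ hq))
                  (fun h => hone (List.mem_cons_of_mem _ h))
                  (List.IsChain.tail hch) hcnt'
              refine ⟨k + 1, Function.update ε (k + 1) e, Function.update gs (k + 1) 1,
                by omega, ?_, ?_, ?_, ?_, ?_⟩
              · intro i
                by_cases hik : i = k + 1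
                · rw [hik, Function.update_self]; exact one_mem G
                · rw [Function.update_of_ne hik]; exact hmem i
              · have hupd : wEval K hK (Function.update ε (k+1) e)
                    (Function.update gs (k+1) 1) k = wEval K hK ε gs k := by
                  apply wEval_congr
                  · intro i hi; exact Function.update_of_ne (by omega) _ _
                  · intro i hi; exact Function.update_of_ne (by omega) _ _
                show (sp K hK e :: t).prod = Function.update gs (k+1) 1 (k+1) *
                  sp K hK (Function.update ε (k+1) e (k+1)) *
                  wEval K hK (Function.update ε (k+1) e) (Function.update gs (k+1) 1) k
                rw [hupd, Function.update_self, Function.update_self, List.prod_cons, hprod]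
                group
              · intro i h1 h2 hee
                by_cases hik : i = k
                · -- new junction : signs must not cancel
                  subst hik
                  rw [Function.update_of_ne (by omega)]
                  intro hgk1
                  rw [Function.update_self, Function.update_of_ne (by omega)] at hee
                  -- t starts with sp (ε k)
                  rcases Hhead with ⟨hgk, t2, ht2⟩ | ⟨hgk, _, _⟩
                  · rw [ht2] at hch
                    have hnr := (List.isChain_cons_cons.mp hch).1
                    apply hnr
                    right
                    constructor
                    · cases e
                      · exact Or.inr rfl
                      · exact Or.inl rfl
                    · rw [sp_inv K hK e, hee, Bool.not_not]
                  · exact hgk hgk1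
                · rw [Function.update_of_ne (show i ≠ k + 1 by omega)]
                  rw [Function.update_of_ne (show i + 1 ≠ k + 1 by omega),
                    Function.update_of_ne (show i ≠ k + 1 by omega)] at hee
                  exact Ha i h1 (by omega) hee
              · left
                refine ⟨Function.update_self _ _ _, t, ?_⟩
                rw [Function.update_self]
              · rcases Hlast with ⟨hg0, t3, ht3⟩ | ⟨hg0, t3, ht3⟩
                · left
                  refine ⟨by rw [Function.update_of_ne (by omega)]; exact hg0,
                    sp K hK e :: t3, ?_⟩
                  rw [Function.update_of_ne (by omega), ht3]; rfl
                · right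
                  refine ⟨by rw [Function.update_of_ne (by omega)]; exact hg0,
                    sp K hK e :: t3, ?_⟩
                  rw [Function.update_of_ne (by omega), Function.update_of_ne (by omega), ht3]
                  rfl

end Lists

section Main

variable {G : Subgroup (Equiv.Perm ℕ)}

lemma sigma_not_mem (hsub : ∀ g ∈ G, ⇑g ∈ ⋃ n, K n) : sigma K hK ∉ G := by
  intro h
  have h2 := hsub _ h
  simp only [Set.mem_iUnion] at h2
  obtain ⟨n, hn⟩ := h2
  exact sigma_not_memK K hK n hn

lemma sigma_inv_not_mem (hsub : ∀ g ∈ G, ⇑g ∈ ⋃ n, K n) : (sigma K hK)⁻¹ ∉ G := by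
  intro h
  exact sigma_not_mem K hK hsub (by simpa using inv_mem h)

lemma sp_not_mem (hsub : ∀ g ∈ G, ⇑g ∈ ⋃ n, K n) (e : Bool) : sp K hK e ∉ G := by
  cases e
  · exact sigma_inv_not_mem K hK hsub
  · exact sigma_not_mem K hK hsub

lemma fix_sp_fin (hG : Cofinitary G) (hsub : ∀ g ∈ G, ⇑g ∈ ⋃ n, K n) (e : Bool) :
    (Fix (sp K hK e)).Finite := by
  have h := word_lemma K hK hG hsub 1 le_rfl (fun _ => e) (fun _ => 1)
    (fun _ => one_mem G) (by intro i h1 h2; omega)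
    (by intro h; cases e <;> simp at h)
  have heq : {x : ℕ | wEval K hK (fun _ => e) (fun _ => 1) 1 x = x} = Fix (sp K hK e) := by
    ext x
    show ((1 : Equiv.Perm ℕ) * sp K hK e * 1) x = x ↔ x ∈ Fix (sp K hK e)
    simp [Fix]
  rwa [heq] at h

lemma canonical_case (hG : Cofinitary G) (hsub : ∀ g ∈ G, ⇑g ∈ ⋃ n, K n)
    {l : List (Equiv.Perm ℕ)} {p q : Equiv.Perm ℕ} {mid : List (Equiv.Perm ℕ)}
    (hl : l = p :: (mid ++ [q]))
    (hok : Ok K hK G l) (hone : (1 : Equiv.Perm ℕ) ∉ l)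
    (hch : List.Chain' (fun x y => ¬ Red K hK G x y) l)
    (hends1 : ¬ (p ∈ G ∧ q ∈ G))
    (hends2 : ¬ (q = p⁻¹ ∧ p ∉ G))
    (hcnt : 1 ≤ cntS G l) :
    (Fix l.prod).Finite := by
  obtain ⟨k, ε, gs, hk, hmem, hprod, Ha, Hhead, Hlast⟩ :=
    conv K hK hsub l.length l le_rfl hok hone hch hcnt
  have hql : l.getLast? = some q := by
    rw [hl, show p :: (mid ++ [q]) = (p :: mid) ++ [q] from rfl]
    exact List.getLast?_concat
  have Hb : ε 1 = !ε k → gs 0 * gs k ≠ 1 := by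
    intro hee
    rcases Hhead with ⟨hgk, t1, ht1⟩ | ⟨hgk, t1, ht1⟩ <;>
      rcases Hlast with ⟨hg0, t2, ht2⟩ | ⟨hg0, t2, ht2⟩
    · exfalso
      apply hends2
      have hp : p = sp K hK (ε k) := by
        rw [hl] at ht1
        exact (List.cons.injEq _ _ _ _).mp ht1 |>.1
      have hq : q = sp K hK (ε 1) := by
        have h2 : l.getLast? = some (sp K hK (ε 1)) := by
          rw [ht2]; exact List.getLast?_concat
        rw [hql] at h2
        exact (Option.some.injEq _ _).mp h2.symm |>.symm
      constructor
      · rw [hq, hp, sp_inv K hK, hee]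
      · rw [hp]
        exact sp_not_mem K hK hsub _
    · simp [hgk, hg0]
    · simp [hgk, hg0]
    · exfalso
      apply hends1
      have hp : p = gs k := by
        rw [hl] at ht1
        exact (List.cons.injEq _ _ _ _).mp ht1 |>.1
      have hq : q = gs 0 := by
        have h2 : l.getLast? = some (gs 0) := by
          rw [ht2, show t2 ++ [sp K hK (ε 1), gs 0] = (t2 ++ [sp K hK (ε 1)]) ++ [gs 0] by
            simp]
          exact List.getLast?_concat
        rw [hql] at h2
        exact ((Option.some.injEq _ _).mp h2.symm).symm
      exact ⟨hp ▸ hmem k, hq ▸ hmem 0⟩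
  have hfin := word_lemma K hK hG hsub k hk ε gs hmem Ha Hb
  have heq : Fix l.prod = {x | wEval K hK ε gs k x = x} := by rw [hprod]; rfl
  rw [heq]
  exact hfin

theorem listP (hG : Cofinitary G) (hsub : ∀ g ∈ G, ⇑g ∈ ⋃ n, K n) :
    ∀ (a b : ℕ) (l : List (Equiv.Perm ℕ)), Ok K hK G l → cntS G l ≤ a →
    l.length ≤ b → (Fix l.prod).Finite ∨ l.prod ∈ G := by
  intro a
  induction a using Nat.strong_induction_on with
  | _ a IHa =>
  intro b
  induction b using Nat.strong_induction_on with
  | _ b IHb =>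
  intro l hok hca hlb
  rcases l with _ | ⟨p, t⟩
  · right; simpa using one_mem G
  rcases t with _ | ⟨q0, t0⟩
  · rcases hok p (by simp) with hpG | hpσ
    · right; simpa using hpG
    · left
      obtain ⟨e, rfl⟩ := letter_sp K hK hpσ
      simpa using fix_sp_fin K hK hG hsub e
  have hb2 : 2 ≤ b := by simp at hlb; omega
  by_cases h1 : (1 : Equiv.Perm ℕ) ∈ p :: q0 :: t0
  · obtain ⟨u, v, huv⟩ := List.append_of_mem h1
    have hpe : (p :: q0 :: t0).prod = (u ++ v).prod := by
      rw [huv]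
      simp [List.prod_append]
    have hres := IHb (b - 1) (by omega) (u ++ v)
      (by
        intro x hx
        apply hok
        rw [huv]
        rcases List.mem_append.mp hx with h | h
        · exact List.mem_append.mpr (Or.inl h)
        · exact List.mem_append.mpr (Or.inr (List.mem_cons_of_mem _ h)))
      (by
        have h2 : cntS G (p :: q0 :: t0) = cntS G (u ++ v) := by
          rw [huv, cntS_append, cntS_append, cntS_cons_G (one_mem G)]
        omega)
      (by
        have h2 : (p :: q0 :: t0).length = (u ++ v).length + 1 := by
          rw [huv]; simp; omega
        omega)
    rw [hpe]
    exact hres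
  · by_cases h2 : List.Chain' (fun x y => ¬ Red K hK G x y) (p :: q0 :: t0)
    · -- no adjacent reduction : analyze the ends
      obtain ⟨mid, q, hmq⟩ : ∃ mid q, q0 :: t0 = mid ++ [q] := by
        rcases List.eq_nil_or_concat (q0 :: t0) with h | ⟨l', a', h⟩
        · simp at h
        · exact ⟨l', a', by simpa [List.concat_eq_append] using h⟩
      have hlform : p :: q0 :: t0 = p :: (mid ++ [q]) := by rw [hmq]
      have hqmem : q ∈ p :: q0 :: t0 := by rw [hlform]; simp
      rcases hok p (by simp) with hpG | hpσ <;> rcases hok q hqmem with hqG | hqσ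
      · -- both ends in G : rotate
        have hres := IHb (b - 1) (by omega) ((q * p) :: mid)
          (by
            intro x hx
            rcases List.mem_cons.mp hx with rfl | hx
            · exact Or.inl (mul_mem hqG hpG)
            · exact hok x (by rw [hlform]; simp [hx]))
          (by
            have e1 : cntS G ((q * p) :: mid) = cntS G mid :=
              cntS_cons_G (mul_mem hqG hpG) _
            have e2 : cntS G (p :: q0 :: t0) = cntS G mid := by
              rw [hlform, cntS_cons_G hpG, cntS_append, cntS_cons_G hqG]
              simp [cntS]
            omega)
          (by
            have : (p :: q0 :: t0).length = mid.length + 2 := by rw [hlform]; simp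
            simp
            omega)
        have hrel : (p :: q0 :: t0).prod = q⁻¹ * ((q * p) :: mid).prod * q := by
          rw [hlform]
          simp only [List.prod_cons, List.prod_append, List.prod_nil, mul_one]
          group
        rcases hres with hfin | hmem
        · left
          rw [hrel, show q⁻¹ * ((q * p) :: mid).prod * q
              = q⁻¹ * ((q * p) :: mid).prod * (q⁻¹)⁻¹ by rw [inv_inv], fix_conj]
          exact hfin.image _
        · right
          rw [hrel]
          exact mul_mem (mul_mem (inv_mem hqG) hmem) hqG
      · -- p ∈ G, q a sigma letter
        left
        have hqnG : q ∉ G := by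
          obtain ⟨e, rfl⟩ := letter_sp K hK hqσ
          exact sp_not_mem K hK hsub e
        exact canonical_case K hK hG hsub hlform hok h1 h2
          (fun h => hqnG h.2) (fun h => h.2 hpG) (cntS_pos hqmem hqnG)
      · -- p sigma, q ∈ G
        left
        have hpnG : p ∉ G := by
          obtain ⟨e, rfl⟩ := letter_sp K hK hpσ
          exact sp_not_mem K hK hsub e
        refine canonical_case K hK hG hsub hlform hok h1 h2
          (fun h => hpnG h.1) ?_ (cntS_pos (by simp) hpnG)
        rintro ⟨hqp, -⟩
        rw [hqp] at hqG
        obtain ⟨e, rfl⟩ := letter_sp K hK hpσ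
        rw [sp_inv K hK] at hqG
        exact sp_not_mem K hK hsub _ hqG
      · -- both sigma letters
        have hpnG : p ∉ G := by
          obtain ⟨e, rfl⟩ := letter_sp K hK hpσ
          exact sp_not_mem K hK hsub e
        have hqnG : q ∉ G := by
          obtain ⟨e, rfl⟩ := letter_sp K hK hqσ
          exact sp_not_mem K hK hsub e
        by_cases hqp : q = p⁻¹
        · -- cancel the two ends
          have hcm : cntS G (p :: q0 :: t0) = cntS G mid + 2 := by
            rw [hlform, cntS_cons_nG hpnG, cntS_append, cntS_cons_nG hqnG]
            simp [cntS]
          have hres := IHa (a - 1) (by omega) b mid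
            (by
              intro x hx
              exact hok x (by rw [hlform]; simp [hx]))
            (by omega)
            (by
              have : (p :: q0 :: t0).length = mid.length + 2 := by rw [hlform]; simp
              omega)
          have hrel : (p :: q0 :: t0).prod = p * mid.prod * p⁻¹ := by
            rw [hlform, hqp]
            simp only [List.prod_cons, List.prod_append, List.prod_nil, mul_one]
            group
          rcases hres with hfin | hmem
          · left
            rw [hrel, fix_conj]
            exact hfin.image _
          · by_cases hm1 : mid.prod = 1
            · right
              rw [hrel, hm1]
              simpa using one_mem G
            · left
              rw [hrel, fix_conj]
              exact ((hG _ hmem hm1).image _)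
        · left
          exact canonical_case K hK hG hsub hlform hok h1 h2
            (fun h => hpnG h.1) (fun h => hqp h.1) (cntS_pos (by simp) hpnG)
    · -- an adjacent reduction exists
      obtain ⟨u, x, y, v, huv, hR⟩ := not_chain'_decomp _ h2
      have hRxy : Red K hK G x y := not_not.mp hR
      rcases hRxy with ⟨hxG, hyG⟩ | ⟨hxσ, hyx⟩
      · -- merge two adjacent G letters
        have hpe : (p :: q0 :: t0).prod = (u ++ (x * y) :: v).prod := by
          rw [huv]
          simp only [List.prod_append, List.prod_cons]
          group
        have hres := IHb (b - 1) (by omega) (u ++ (x * y) :: v)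
          (by
            intro z hz
            rcases List.mem_append.mp hz with h | h
            · exact hok z (by rw [huv]; exact List.mem_append.mpr (Or.inl h))
            · rcases List.mem_cons.mp h with rfl | h
              · exact Or.inl (mul_mem hxG hyG)
              · exact hok z (by
                  rw [huv]
                  exact List.mem_append.mpr (Or.inr (by simp [h])))
          )
          (by
            have e1 : cntS G (p :: q0 :: t0) = cntS G u + cntS G v := by
              rw [huv, cntS_append, cntS_cons_G hxG, cntS_cons_G hyG]
            have e2 : cntS G (u ++ (x * y) :: v) = cntS G u + cntS G v := by
              rw [cntS_append, cntS_cons_G (mul_mem hxG hyG)]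
            omega)
          (by
            have e1 : (p :: q0 :: t0).length = u.length + v.length + 2 := by
              rw [huv]; simp; omega
            have e2 : (u ++ (x * y) :: v).length = u.length + v.length + 1 := by
              simp; omega
            omega)
        rw [hpe]
        exact hres
      · -- cancel sigma sigma⁻¹
        have hxy : x * y = 1 := by rw [hyx]; simp
        have hxnG : x ∉ G := by
          obtain ⟨e, rfl⟩ := letter_sp K hK hxσ
          exact sp_not_mem K hK hsub e
        have hynG : y ∉ G := by
          rw [hyx]
          intro h
          exact hxnG (by simpa using inv_mem h)
        have hcm : cntS G (p :: q0 :: t0) = cntS G u + cntS G v + 2 := by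
          rw [huv, cntS_append, cntS_cons_nG hxnG, cntS_cons_nG hynG]
          omega
        have hpe : (p :: q0 :: t0).prod = (u ++ v).prod := by
          rw [huv]
          simp only [List.prod_append, List.prod_cons]
          rw [← mul_assoc x y, hxy, one_mul]
        have hres := IHa (a - 1) (by omega) b (u ++ v)
          (by
            intro z hz
            apply hok
            rw [huv]
            rcases List.mem_append.mp hz with h | h
            · exact List.mem_append.mpr (Or.inl h)
            · exact List.mem_append.mpr (Or.inr (by simp [h])))
          (by rw [cntS_append]; omega)
          (by
            have e1 : (p :: q0 :: t0).length = u.length + v.length + 2 := by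
              rw [huv]; simp; omega
            have e2 : (u ++ v).length = u.length + v.length := by simp
            omega)
        rw [hpe]
        exact hres

end Main
end Stmt16

theorem stmt16 (G : Subgroup (Equiv.Perm ℕ)) (hG : Cofinitary G)
    (K : ℕ → Set (ℕ → ℕ)) (hK : ∀ n, IsCompact (K n))
    (hsub : ∀ g ∈ G, ⇑g ∈ ⋃ n, K n) :
    ∃ H : Subgroup (Equiv.Perm ℕ), Cofinitary H ∧ G < H := by
  classical
  set σ' : Equiv.Perm ℕ := Stmt16.sigma K hK with hσ'
  set s : Set (Equiv.Perm ℕ) := ↑G ∪ {σ'} with hs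
  refine ⟨Subgroup.closure s, ?_, ?_⟩
  · intro h hh hne
    have hmem : h ∈ Submonoid.closure (s ∪ s⁻¹) := by
      rw [← Subgroup.closure_toSubmonoid]
      exact hh
    obtain ⟨l, hl, hlp⟩ := Submonoid.exists_list_of_mem_closure hmem
    have hok : Stmt16.Ok K hK G l := by
      intro p hp
      rcases hl p hp with hps | hps
      · rcases hps with hpG | hpσ
        · exact Or.inl hpG
        · exact Or.inr (Or.inl hpσ)
      · rcases Set.mem_inv.mp hps with hpG | hpσ
        · exact Or.inl (by simpa using inv_mem hpG)
        · right; right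
          have h2 : p⁻¹ = σ' := hpσ
          have h3 : p = σ'⁻¹ := by rw [← h2, inv_inv]
          exact h3
    have hres := Stmt16.listP K hK hG hsub (Stmt16.cntS G l) l.length l hok le_rfl le_rfl
    rw [hlp] at hres
    rcases hres with hfin | hmemG
    · exact hfin
    · exact hG h hmemG hne
  · refine SetLike.lt_iff_le_and_exists.mpr ⟨?_, σ', ?_, ?_⟩
    · intro g hg
      exact Subgroup.subset_closure (Or.inl hg)
    · exact Subgroup.subset_closure (Or.inr rfl)
    · exact Stmt16.sigma_not_mem K hK hsub
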